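/- In particular, the coefficient of x^{m+n+1} in the power series ₂F₁(−ν−n, −m; −m−n; x) − (1−x)^ν · ₂F₁(ν−m, −n; −m−n; x) equals (−1)^m · C(n+ν, m+n+1)/C(m+n, m), and all coefficients of x^k for 0 ≤ k ≤ m+n vanish. -/

import Mathlib

open Finset PowerSeries

/-- Pochhammer symbol `(a)_k = a(a+1)⋯(a+k-1)`. -/
noncomputable def poch (a : ℝ) (k : ℕ) : ℝ := ∏ i ∈ Finset.range k, (a + i)

/-- Generalized binomial coefficient `C(a,k) = a(a-1)⋯(a-k+1)/k!`. -/
noncomputable def gchoose (a : ℝ) (k : ℕ) : ℝ :=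
  (∏ i ∈ Finset.range k, (a - i)) / k.factorial

/-- The (formal) hypergeometric series `₂F₁(a, b; c; x) ∈ ℝ⟦x⟧`. -/
noncomputable def hypSeries (a b c : ℝ) : PowerSeries ℝ :=
  PowerSeries.mk fun k => poch a k * poch b k / (poch c k * k.factorial)

/-- The formal binomial series `(1-x)^ν = ∑_k C(ν,k)(-1)^k x^k ∈ ℝ⟦x⟧`. -/
noncomputable def binomOneSub (ν : ℝ) : PowerSeries ℝ :=
  PowerSeries.mk fun k => gchoose ν k * (-1) ^ k

section Gen
variable {A : Type*} [CommRing A]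

/-- general Pochhammer over a commutative ring -/
def gpoch (a : A) (k : ℕ) : A := ∏ i ∈ Finset.range k, (a + i)

lemma gpoch_zero (a : A) : gpoch a 0 = 1 := by simp [gpoch]

lemma gpoch_succ (a : A) (k : ℕ) : gpoch a (k+1) = gpoch a k * (a + k) :=
  Finset.prod_range_succ _ _

lemma gpoch_succ' (a : A) (k : ℕ) : gpoch a (k+1) = gpoch (a+1) k * a := by
  rw [gpoch, Finset.prod_range_succ']
  simp only [Nat.cast_zero, add_zero]
  congr 1
  · exact Finset.prod_congr rfl fun i _ => by push_cast; ring
  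
lemma gpoch_add (a : A) (j k : ℕ) : gpoch a (j + k) = gpoch a j * gpoch (a + j) k := by
  rw [gpoch, Finset.prod_range_add]
  congr 1
  exact Finset.prod_congr rfl fun i _ => by push_cast; ring

/-- the summand in the Saalschütz sum (cross-multiplied). -/
def sst (a b c : A) (k i : ℕ) : A :=
  (k.choose i : A) * (gpoch a i * gpoch b i *
    (gpoch (c + i) (k - i) * gpoch (c - a - b) (k - i)))

/-- the WZ certificate -/
def scert (a b c : A) (k : ℕ) : ℕ → A
  | 0 => 0
  | (i+1) => (a + i) * (b + i) * sst a b c k i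

lemma key_term (a b c : A) (i j : ℕ) :
    (c + (i:A) + j - a) * (c + (i:A) + j - b) * sst a b c (i+j) i - sst a b c (i+j+1) i
      = scert a b c (i+j) (i+1) - scert a b c (i+j) i := by
  cases i with
  | zero =>
    simp only [sst, scert, Nat.zero_add, Nat.choose_zero_right, Nat.cast_one, one_mul,
      Nat.sub_zero, gpoch_zero, Nat.cast_zero, add_zero, Nat.choose_zero_right]
    rw [gpoch_succ c j, gpoch_succ (c - a - b) j]
    ring
  | succ i' =>
    have hs1 : i' + 1 + j - (i' + 1) = j := by omega
    have hs2 : i' + 1 + j + 1 - (i' + 1) = j + 1 := by omega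
    have hs3 : i' + 1 + j - i' = j + 1 := by omega
    have hch : ((i'+1+j+1).choose (i'+1) : A)
        = ((i'+1+j).choose i' : A) + ((i'+1+j).choose (i'+1) : A) := by
      rw [show i'+1+j+1 = (i'+j+1)+1 from by omega]
      rw [Nat.choose_succ_succ (i'+j+1) i']
      push_cast
      rw [show i'+j+1 = i'+1+j from by omega]
    have hXY : ((i'+1+j).choose (i'+1) : A) * ((i':A)+1)
        = ((i'+1+j).choose i' : A) * ((j:A)+1) := by
      have := Nat.choose_succ_right_eq (i'+1+j) i'
      have h2 : i'+1+j - i' = j+1 := by omega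
      rw [h2] at this
      exact_mod_cast congrArg (Nat.cast : ℕ → A) this
    simp only [sst, scert, hs1, hs2, hs3, hch]
    have hbase : (c + ((i'+1:ℕ):A)) = (c + (i':A)) + 1 := by push_cast; ring
    rw [hbase, gpoch_succ ((c + (i':A)) + 1) j, gpoch_succ' (c + (i':A)) j,
        gpoch_succ a i', gpoch_succ b i', gpoch_succ (c - a - b) j]
    push_cast
    linear_combination (gpoch a i' * gpoch b i' * gpoch ((c + (i':A)) + 1) j *
      gpoch (c - a - b) j * (a+(i':A)) * (b+(i':A)) * (c-a-b+(j:A))) * hXY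

lemma LL_rec (a b c : A) (k : ℕ) :
    ∑ i ∈ range (k+2), sst a b c (k+1) i
      = (c + k - a) * (c + k - b) * ∑ i ∈ range (k+1), sst a b c k i := by
  have h1 : ∀ i ∈ range (k+1),
      sst a b c (k+1) i
        = (c + (k:A) - a) * (c + (k:A) - b) * sst a b c k i
          - (scert a b c k (i+1) - scert a b c k i) := by
    intro i hi
    have hik : i ≤ k := by simpa [Nat.lt_succ_iff] using hi
    obtain ⟨j, rfl⟩ : ∃ j, k = i + j := ⟨k - i, by omega⟩
    have h := key_term a b c i j
    push_cast at h ⊢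
    linear_combination (-1 : A) * h
  rw [Finset.sum_range_succ, Finset.sum_congr rfl h1, Finset.sum_sub_distrib,
    Finset.sum_range_sub (scert a b c k), ← Finset.mul_sum]
  have h2 : scert a b c k (k+1) = (a + k) * (b + k) * (gpoch a k * gpoch b k) := by
    simp [scert, sst, Nat.sub_self, gpoch_zero]
  have h3 : sst a b c (k+1) (k+1)
      = gpoch a k * (a + k) * (gpoch b k * (b + k)) := by
    simp [sst, Nat.sub_self, gpoch_zero, gpoch_succ]
  rw [h2, h3]
  simp [scert]
  ring

lemma LL_eq (a b c : A) (k : ℕ) :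
    ∑ i ∈ range (k+1), sst a b c k i = gpoch (c-a) k * gpoch (c-b) k := by
  induction k with
  | zero => simp [sst, gpoch_zero]
  | succ k ih =>
    rw [show k+1+1 = k+2 from rfl, LL_rec, ih, gpoch_succ (c-a) k, gpoch_succ (c-b) k]
    ring

lemma gpoch_map {B : Type*} [CommRing B] (f : A →+* B) (a : A) (k : ℕ) :
    f (gpoch a k) = gpoch (f a) k := by
  rw [gpoch, map_prod]
  exact Finset.prod_congr rfl fun i _ => by rw [map_add, map_natCast]

end Gen

-- ## Real helpers

lemma gpoch_real (a : ℝ) (k : ℕ) : gpoch a k = poch a k := rfl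

lemma poch_succ (a : ℝ) (k : ℕ) : poch a (k+1) = poch a k * (a + k) :=
  Finset.prod_range_succ _ _

lemma poch_add_real (a : ℝ) (j k : ℕ) : poch a (j + k) = poch a j * poch (a + j) k :=
  gpoch_add a j k

lemma prod_cast_factorial (N : ℕ) : ∏ l ∈ range N, ((l:ℝ) + 1) = N.factorial := by
  induction N with
  | zero => simp
  | succ N ih => rw [Finset.prod_range_succ, ih, Nat.factorial_succ]; push_cast; ring

lemma prod_sub_factorial (N : ℕ) : ∏ l ∈ range N, ((N:ℝ) - l) = N.factorial := by
  have h := Finset.prod_range_reflect (fun l => (N:ℝ) - l) N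
  rw [← h, ← prod_cast_factorial N]
  apply Finset.prod_congr rfl
  intro l hl
  have hlN : l < N := mem_range.mp hl
  have : ((N - 1 - l : ℕ) : ℝ) = (N:ℝ) - 1 - l := by
    have h1 : (1:ℝ) + l = ((1 + l : ℕ) : ℝ) := by push_cast; ring
    rw [show N - 1 - l = N - (1 + l) from by omega, Nat.cast_sub (by omega)]
    push_cast; ring
  rw [this]; ring

lemma poch_neg_prod (x : ℝ) (k : ℕ) :
    ∏ l ∈ range k, (x - l) = (-1)^k * poch (-x) k := by
  have : ∀ l ∈ range k, x - (l:ℝ) = (-1) * (-x + l) := fun l _ => by ring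
  rw [Finset.prod_congr rfl this, Finset.prod_mul_distrib, Finset.prod_const, card_range, poch]

lemma gchoose_eq (x : ℝ) (k : ℕ) :
    gchoose x k = (-1)^k * poch (-x) k / k.factorial := by
  rw [gchoose, poch_neg_prod]

lemma poch_negnat (N : ℕ) : poch (-(N:ℝ)) N = (-1)^N * N.factorial := by
  have : ∀ l ∈ range N, -(N:ℝ) + l = (-1) * ((N:ℝ) - l) := fun l _ => by ring
  rw [poch, Finset.prod_congr rfl this, Finset.prod_mul_distrib, Finset.prod_const,
    card_range, prod_sub_factorial]

lemma poch_nat_zero (N k : ℕ) (h : N < k) : poch (-(N:ℝ)) k = 0 :=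
  Finset.prod_eq_zero (mem_range.mpr h) (by simp)

lemma poch_ne_zero (x : ℝ) (k : ℕ) (h : ∀ l < k, x + l ≠ 0) : poch x k ≠ 0 :=
  Finset.prod_ne_zero_iff.mpr fun l hl => h l (mem_range.mp hl)

lemma poch_neg_base_ne_zero (m n : ℕ) (i j : ℕ) (hij : i + j ≤ m + n) :
    poch (-(m:ℝ) - n + i) j ≠ 0 := by
  apply poch_ne_zero
  intro l hl
  have : (l:ℝ) + i < (m:ℝ) + n := by
    have : l + i < m + n := by omega
    exact_mod_cast this
  intro hc
  nlinarith [hc]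

-- ## Specialization of the Saalschütz identity to polynomials in c, evaluated at c = -m-n

lemma master (ν : ℝ) (m n k : ℕ) :
    ∑ i ∈ range (k+1), (k.choose i : ℝ) *
      (poch (ν - m) i * poch (-(n:ℝ)) i *
        (poch ((-(m:ℝ) - n) + i) (k - i) * poch (-ν) (k - i)))
    = poch (-ν - n) k * poch (-(m:ℝ)) k := by
  have H := LL_eq (A := Polynomial ℝ) (Polynomial.C (ν - m)) (Polynomial.C (-(n:ℝ)))
    Polynomial.X k
  have H2 := congrArg (Polynomial.evalRingHom (-(m:ℝ) - n)) H
  rw [map_sum] at H2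
  simp only [sst, map_mul, map_natCast, gpoch_map, map_sub, map_add,
    Polynomial.coe_evalRingHom, Polynomial.eval_C, Polynomial.eval_X,
    Polynomial.eval_natCast] at H2
  rw [show (-(m:ℝ) - n) - (ν - m) - (-(n:ℝ)) = -ν from by ring,
      show (-(m:ℝ) - n) - (ν - m) = -ν - n from by ring,
      show (-(m:ℝ) - n) - (-(n:ℝ)) = -(m:ℝ) from by ring] at H2
  simpa only [gpoch_real] using H2

lemma prod_erase_eval (m n : ℕ) :
    ∏ j ∈ (range (m+n+1)).erase m, ((j:ℝ) - m) = (-1)^m * m.factorial * n.factorial := by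
  have hset : (range (m+n+1)).erase m = range m ∪ Ico (m+1) (m+n+1) := by
    ext j
    simp only [mem_erase, mem_range, mem_union, mem_Ico]
    omega
  have hdisj : Disjoint (range m) (Ico (m+1) (m+n+1)) := by
    rw [Finset.disjoint_left]
    intro j hj hj2
    simp only [mem_range] at hj
    simp only [mem_Ico] at hj2
    omega
  rw [hset, Finset.prod_union hdisj]
  have h1 : ∏ j ∈ range m, ((j:ℝ) - m) = (-1)^m * m.factorial := by
    have : ∀ j ∈ range m, ((j:ℝ) - m) = (-1) * ((m:ℝ) - j) := fun j _ => by ring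
    rw [Finset.prod_congr rfl this, Finset.prod_mul_distrib, Finset.prod_const,
      card_range, prod_sub_factorial]
  have h2 : ∏ j ∈ Ico (m+1) (m+n+1), ((j:ℝ) - m) = n.factorial := by
    rw [Finset.prod_Ico_eq_prod_range]
    rw [show m+n+1 - (m+1) = n from by omega, ← prod_cast_factorial n]
    apply Finset.prod_congr rfl
    intro l _
    push_cast
    ring
  rw [h1, h2]

lemma masterK (ν : ℝ) (m n : ℕ) :
    ∑ i ∈ range (m+n+1), ((m+n+1).choose i : ℝ) *
      (poch (ν - m) i * poch (-(n:ℝ)) i *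
        (poch ((-(m:ℝ) - n) + i) (m+n-i) * poch (-ν) (m+n+1-i)))
    = poch (-ν - n) (m+n+1) * ((-1)^m * m.factorial * n.factorial) := by
  set K := m + n + 1 with hK
  set a : Polynomial ℝ := Polynomial.C (ν - m) with ha
  set b : Polynomial ℝ := Polynomial.C (-(n:ℝ)) with hb
  have H := LL_eq (A := Polynomial ℝ) a b Polynomial.X K
  -- last term of the sum vanishes
  have hlast : sst a b Polynomial.X K K = 0 := by
    have : gpoch b K = Polynomial.C (poch (-(n:ℝ)) K) := (gpoch_map Polynomial.C _ _).symm
    rw [sst, Nat.sub_self, gpoch_zero, this, poch_nat_zero n K (by omega)]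
    simp
  rw [Finset.sum_range_succ, hlast, add_zero] at H
  -- pull out the common factor (X + (m+n)) on the left
  have hfac : ∀ i ∈ range K,
      sst a b Polynomial.X K i
        = (Polynomial.X + ((m+n : ℕ) : Polynomial ℝ)) *
          ((K.choose i : Polynomial ℝ) * (gpoch a i * gpoch b i *
            (gpoch (Polynomial.X + i) (m+n-i) * gpoch (Polynomial.X - a - b) (K - i)))) := by
    intro i hi
    have hiK : i < K := mem_range.mp hi
    have hKi : K - i = (m+n-i) + 1 := by omega
    rw [sst, hKi, gpoch_succ]
    have hcast : Polynomial.X + (i:Polynomial ℝ) + ((m+n-i : ℕ) : Polynomial ℝ)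
        = Polynomial.X + ((m+n : ℕ) : Polynomial ℝ) := by
      rw [add_assoc, ← Nat.cast_add, show i + (m+n-i) = m+n from by omega]
    rw [hcast]
    ring
  rw [Finset.sum_congr rfl hfac, ← Finset.mul_sum] at H
  -- factor the right side
  have hXb : Polynomial.X - b = Polynomial.X + Polynomial.C (n:ℝ) := by
    rw [hb, map_neg, sub_neg_eq_add]
  have hrhs : gpoch (Polynomial.X - b) K
      = (Polynomial.X + ((m+n : ℕ) : Polynomial ℝ)) *
        ∏ j ∈ (range K).erase m, (Polynomial.X + Polynomial.C (n:ℝ) + (j : Polynomial ℝ)) := by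
    rw [hXb, gpoch]
    rw [← Finset.mul_prod_erase (range K) _ (mem_range.mpr (show m < K by omega))]
    congr 1
    rw [← Polynomial.C_eq_natCast, ← Polynomial.C_eq_natCast, add_assoc, ← Polynomial.C_add]
    congr 2
    push_cast
    ring
  rw [hrhs] at H
  rw [show gpoch (Polynomial.X - a) K *
      ((Polynomial.X + ((m+n : ℕ) : Polynomial ℝ)) * ∏ j ∈ (range K).erase m,
        (Polynomial.X + Polynomial.C (n:ℝ) + (j : Polynomial ℝ)))
    = (Polynomial.X + ((m+n : ℕ) : Polynomial ℝ)) * (gpoch (Polynomial.X - a) K *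
        ∏ j ∈ (range K).erase m, (Polynomial.X + Polynomial.C (n:ℝ) + (j : Polynomial ℝ))) from by
      ring] at H
  have hne : (Polynomial.X + ((m+n : ℕ) : Polynomial ℝ)) ≠ 0 := by
    rw [← Polynomial.C_eq_natCast]
    exact Polynomial.X_add_C_ne_zero _
  have H2 := mul_left_cancel₀ hne H
  -- evaluate at -(m) - n
  have H3 := congrArg (Polynomial.evalRingHom (-(m:ℝ) - n)) H2
  rw [map_sum, map_mul] at H3
  simp only [ha, hb, map_mul, map_natCast, gpoch_map, map_sub, map_add, map_prod,
    Polynomial.coe_evalRingHom, Polynomial.eval_C, Polynomial.eval_X,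
    Polynomial.eval_natCast] at H3
  rw [show (-(m:ℝ) - n) - (ν - m) - (-(n:ℝ)) = -ν from by ring,
      show (-(m:ℝ) - n) - (ν - m) = -ν - n from by ring] at H3
  have hprod : ∏ j ∈ (range K).erase m, ((-(m:ℝ) - n) + (n:ℝ) + (j:ℝ))
      = ∏ j ∈ (range K).erase m, ((j:ℝ) - m) := by
    apply Finset.prod_congr rfl
    intro j _
    ring
  rw [hprod, prod_erase_eval m n] at H3
  simpa only [gpoch_real] using H3

lemma bre_eq (x : ℝ) (j : ℕ) :
    gchoose x j * (-1)^j = poch (-x) j / j.factorial := by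
  rw [gchoose_eq, div_mul_eq_mul_div, mul_comm ((-1:ℝ)^j * poch (-x) j) ((-1:ℝ)^j),
    ← mul_assoc, ← mul_pow]
  norm_num

lemma pochmn_ne (m n i : ℕ) (h : i ≤ m + n) : poch (-(m:ℝ) - n) i ≠ 0 := by
  apply poch_ne_zero
  intro l hl
  have hlt : (l:ℝ) < (m:ℝ) + n := by exact_mod_cast lt_of_lt_of_le hl h
  intro hc
  linarith

lemma coeff_prod_eq (ν : ℝ) (m n k : ℕ) :
    PowerSeries.coeff k (binomOneSub ν * hypSeries (ν - m) (-(n:ℝ)) (-(m:ℝ) - n))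
      = ∑ i ∈ range (k+1),
          (poch (ν - m) i * poch (-(n:ℝ)) i / (poch (-(m:ℝ) - n) i * i.factorial))
            * (gchoose ν (k-i) * (-1)^(k-i)) := by
  rw [mul_comm, PowerSeries.coeff_mul, Finset.Nat.sum_antidiagonal_eq_sum_range_succ_mk]
  simp [hypSeries, binomOneSub, PowerSeries.coeff_mk]

lemma part2 (ν : ℝ) (m n k : ℕ) (hk : k ≤ m + n) :
    PowerSeries.coeff k
        (hypSeries (-ν - n) (-(m : ℝ)) (-(m : ℝ) - n) -
          binomOneSub ν * hypSeries (ν - m) (-(n : ℝ)) (-(m : ℝ) - n)) = 0 := by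
  rw [map_sub, coeff_prod_eq]
  have hD : poch (-(m:ℝ) - n) k * (k.factorial : ℝ) ≠ 0 :=
    mul_ne_zero (pochmn_ne m n k hk) (Nat.cast_ne_zero.mpr (Nat.factorial_ne_zero k))
  have hsum : ∑ i ∈ range (k+1),
      (poch (ν - m) i * poch (-(n:ℝ)) i / (poch (-(m:ℝ) - n) i * i.factorial))
        * (gchoose ν (k-i) * (-1)^(k-i))
      = poch (-ν - n) k * poch (-(m:ℝ)) k / (poch (-(m:ℝ) - n) k * k.factorial) := by
    rw [eq_div_iff hD, Finset.sum_mul, ← master ν m n k]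
    apply Finset.sum_congr rfl
    intro i hi
    have hik : i ≤ k := by simpa [Nat.lt_succ_iff] using hi
    rw [bre_eq]
    have hsplit : poch (-(m:ℝ) - n) k
        = poch (-(m:ℝ) - n) i * poch ((-(m:ℝ) - n) + i) (k - i) := by
      have h := poch_add_real (-(m:ℝ) - n) i (k - i)
      rwa [show i + (k - i) = k from by omega] at h
    have hch : ((k.choose i : ℝ)) * (i.factorial : ℝ) * ((k-i).factorial : ℝ)
        = (k.factorial : ℝ) := by
      exact_mod_cast congrArg (Nat.cast (R := ℝ)) (Nat.choose_mul_factorial_mul_factorial hik)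
    have h1 : poch (-(m:ℝ) - n) i ≠ 0 := pochmn_ne m n i (le_trans hik hk)
    have h2 : poch ((-(m:ℝ) - n) + i) (k - i) ≠ 0 :=
      poch_neg_base_ne_zero m n i (k - i) (by omega)
    have h3 : (i.factorial : ℝ) ≠ 0 := Nat.cast_ne_zero.mpr (Nat.factorial_ne_zero i)
    have h4 : ((k-i).factorial : ℝ) ≠ 0 := Nat.cast_ne_zero.mpr (Nat.factorial_ne_zero (k-i))
    rw [hsplit]
    field_simp
    linear_combination (-(poch (ν - m) i * poch (-(n:ℝ)) i * poch (-ν) (k-i))) * hch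
  rw [hsum]
  simp [hypSeries, PowerSeries.coeff_mk]

lemma part1 (ν : ℝ) (m n : ℕ) :
    PowerSeries.coeff (m + n + 1)
        (hypSeries (-ν - n) (-(m : ℝ)) (-(m : ℝ) - n) -
          binomOneSub ν * hypSeries (ν - m) (-(n : ℝ)) (-(m : ℝ) - n)) =
      (-1) ^ m * gchoose ((n : ℝ) + ν) (m + n + 1) / ((m + n).choose m) := by
  have hmn : -(m:ℝ) - n = -(((m+n : ℕ)):ℝ) := by push_cast; ring
  rw [map_sub, coeff_prod_eq ν m n (m+n+1)]
  -- first series has zero coefficient there (denominator vanishes)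
  have hzero1 : PowerSeries.coeff (m+n+1) (hypSeries (-ν - n) (-(m : ℝ)) (-(m : ℝ) - n))
      = 0 := by
    simp only [hypSeries, PowerSeries.coeff_mk]
    rw [hmn, poch_nat_zero (m+n) (m+n+1) (by omega), zero_mul, div_zero]
  rw [hzero1, Finset.sum_range_succ]
  -- last summand vanishes
  have hlast : (poch (ν - m) (m+n+1) * poch (-(n:ℝ)) (m+n+1)
      / (poch (-(m:ℝ) - n) (m+n+1) * (m+n+1).factorial))
        * (gchoose ν (m+n+1-(m+n+1)) * (-1)^(m+n+1-(m+n+1))) = 0 := by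
    rw [poch_nat_zero n (m+n+1) (by omega), mul_zero, zero_div, zero_mul]
  rw [hlast, add_zero]
  -- evaluate the main sum
  have hD2 : poch (-(m:ℝ) - n) (m+n) * ((m+n+1).factorial : ℝ) ≠ 0 :=
    mul_ne_zero (pochmn_ne m n (m+n) le_rfl)
      (Nat.cast_ne_zero.mpr (Nat.factorial_ne_zero (m+n+1)))
  have hS : ∑ i ∈ range (m+n+1),
      (poch (ν - m) i * poch (-(n:ℝ)) i / (poch (-(m:ℝ) - n) i * i.factorial))
        * (gchoose ν (m+n+1-i) * (-1)^(m+n+1-i))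
      = poch (-ν - n) (m+n+1) * ((-1)^m * m.factorial * n.factorial)
        / (poch (-(m:ℝ) - n) (m+n) * (m+n+1).factorial) := by
    rw [eq_div_iff hD2, Finset.sum_mul, ← masterK ν m n]
    apply Finset.sum_congr rfl
    intro i hi
    have hik : i ≤ m + n := by
      have := mem_range.mp hi
      omega
    rw [bre_eq]
    have hsplit : poch (-(m:ℝ) - n) (m+n)
        = poch (-(m:ℝ) - n) i * poch ((-(m:ℝ) - n) + i) (m+n-i) := by
      have h := poch_add_real (-(m:ℝ) - n) i (m+n-i)
      rwa [show i + (m+n-i) = m+n from by omega] at h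
    have hch : (((m+n+1).choose i : ℝ)) * (i.factorial : ℝ) * ((m+n+1-i).factorial : ℝ)
        = ((m+n+1).factorial : ℝ) := by
      exact_mod_cast congrArg (Nat.cast (R := ℝ))
        (Nat.choose_mul_factorial_mul_factorial (show i ≤ m+n+1 by omega))
    have h1 : poch (-(m:ℝ) - n) i ≠ 0 := pochmn_ne m n i hik
    have h2 : poch ((-(m:ℝ) - n) + i) (m+n-i) ≠ 0 :=
      poch_neg_base_ne_zero m n i (m+n-i) (by omega)
    have h3 : (i.factorial : ℝ) ≠ 0 := Nat.cast_ne_zero.mpr (Nat.factorial_ne_zero i)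
    have h4 : ((m+n+1-i).factorial : ℝ) ≠ 0 :=
      Nat.cast_ne_zero.mpr (Nat.factorial_ne_zero (m+n+1-i))
    rw [hsplit]
    field_simp
    linear_combination (-(poch (ν - m) i * poch (-(n:ℝ)) i * poch (-ν) (m+n+1-i))) * hch
  rw [hS]
  -- final algebra
  have hval : poch (-(m:ℝ) - n) (m+n) = (-1)^(m+n) * ((m+n).factorial : ℝ) := by
    rw [hmn, poch_negnat]
  have hgch : gchoose ((n : ℝ) + ν) (m+n+1)
      = (-1)^(m+n+1) * poch (-ν - n) (m+n+1) / ((m+n+1).factorial : ℝ) := by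
    rw [gchoose_eq, show -((n:ℝ) + ν) = -ν - n from by ring]
  have hcb : (((m+n).choose m : ℝ)) * (m.factorial : ℝ) * (n.factorial : ℝ)
      = ((m+n).factorial : ℝ) := by
    have h := Nat.choose_mul_factorial_mul_factorial (show m ≤ m+n by omega)
    rw [show m + n - m = n from by omega] at h
    exact_mod_cast congrArg (Nat.cast (R := ℝ)) h
  have hCne : (((m+n).choose m : ℝ)) ≠ 0 :=
    Nat.cast_ne_zero.mpr (Nat.choose_pos (show m ≤ m+n by omega)).ne'
  have hs : ((-1:ℝ))^(m+n) * ((-1:ℝ))^(m+n) = 1 := by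
    rw [← mul_pow]; norm_num
  have hKfac : ((m+n+1).factorial : ℝ) ≠ 0 :=
    Nat.cast_ne_zero.mpr (Nat.factorial_ne_zero (m+n+1))
  have hMfac : ((m+n).factorial : ℝ) ≠ 0 :=
    Nat.cast_ne_zero.mpr (Nat.factorial_ne_zero (m+n))
  rw [hval, hgch, pow_succ]
  field_simp
  linear_combination ((-1:ℝ)^m * poch (-ν - (n:ℝ)) (m+n+1) * (((m+n).factorial : ℝ))) * hs
    - ((-1:ℝ)^m * poch (-ν - (n:ℝ)) (m+n+1)) * hcb

/-- **Order of vanishing and leading coefficient of the Hermite–Padé remainder:**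
the coefficient of `x^{m+n+1}` in
`₂F₁(−ν−n, −m; −m−n; x) − (1−x)^ν · ₂F₁(ν−m, −n; −m−n; x)`
equals `(−1)^m C(n+ν, m+n+1)/C(m+n, m)`, and the coefficients of `x^k` vanish
for all `0 ≤ k ≤ m+n`. -/
theorem stmt_3 (ν : ℝ) (m n : ℕ) (hν : ∀ j : ℕ, ν ≠ -((j : ℝ) + 1)) :
    (PowerSeries.coeff (m + n + 1)
        (hypSeries (-ν - n) (-(m : ℝ)) (-(m : ℝ) - n) -
          binomOneSub ν * hypSeries (ν - m) (-(n : ℝ)) (-(m : ℝ) - n)) =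
      (-1) ^ m * gchoose ((n : ℝ) + ν) (m + n + 1) / ((m + n).choose m)) ∧
    ∀ k ≤ m + n,
      PowerSeries.coeff k
        (hypSeries (-ν - n) (-(m : ℝ)) (-(m : ℝ) - n) -
          binomOneSub ν * hypSeries (ν - m) (-(n : ℝ)) (-(m : ℝ) - n)) = 0 := by
  exact ⟨part1 ν m n, fun k hk => part2 ν m n k hk⟩
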